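/- Let $R \to A$ be a map of commutative rings and let $E(\tau) = F \times_\tau B$ be a twisted cartesian product of simplicial sets with simplicial structure group $G$ acting on $F$ from the left. Endow $\mathcal{L}^R_F(A)$ (whose $n$-simplices are $\bigotimes_{f \in F_n} A$) with the left $G$-action given by $(g, \bigotimes_f a_f) \mapsto \bigotimes_f a_{g^{-1}f}$. Then there is an isomorphism of simplicial commutative $R$-algebras $\mathcal{L}^R_{E(\tau)}(A) \cong \mathcal{L}^R_B(\mathcal{L}^R_F(A)^\tau)$, where the right-hand side is the twisted Loday construction of the simplicial $R$-algebra $\mathcal{L}^R_F(A)$ over $B$ twisted by $\tau$. -/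

import Mathlib

/-!
STATEMENT 5: Let `R → A` be a map of commutative rings and `E(τ) = F ×_τ B` a twisted
cartesian product with simplicial structure group `G` acting on `F` from the left.  Endow
`𝓛^R_F(A)` (with `n`-simplices `⨂_{f ∈ Fₙ} A`) with the `G`-action
`(g, ⨂_f a_f) ↦ ⨂_f a_{g⁻¹f}`.  Then `𝓛^R_{E(τ)}(A) ≅ 𝓛^R_B(𝓛^R_F(A)^τ)` as simplicial
commutative `R`-algebras.

We use the monomial (pure-tensor) model: an element of `⨂_{x ∈ Xₙ} A` is a family
`Xₙ → A`, faces multiply factors along fibers, degeneracies insert units.  The canonical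
identification `⨂_{(f,b) ∈ Fₙ × Bₙ} A ≅ ⨂_{b ∈ Bₙ} (⨂_{f ∈ Fₙ} A)` is currying, and the
theorem asserts that currying intertwines all the structure maps of the two constructions.
-/

open CategoryTheory Simplicial Finset

private lemma prod_filter_pair {α β M : Type*} [Fintype α] [Fintype β] [CommMonoid M]
    (P : β → α → Prop) (Q : β → Prop) [∀ b, DecidablePred (P b)] [DecidablePred Q]
    [DecidablePred fun p : α × β => P p.2 p.1 ∧ Q p.2]
    (x : α × β → M) :
    ∏ p ∈ Finset.univ.filter (fun p : α × β => P p.2 p.1 ∧ Q p.2), x p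
      = ∏ b ∈ Finset.univ.filter Q, ∏ a ∈ Finset.univ.filter (P b), x (a, b) := by
  rw [Finset.prod_filter, ← Finset.univ_product_univ, Finset.prod_product_right,
    Finset.prod_filter]
  refine Finset.prod_congr rfl fun b _ => ?_
  rw [Finset.prod_filter]
  by_cases hb : Q b
  · simp [hb]
  · simp [hb]

theorem loday_of_tcp_iso_twisted_loday
    (R A : Type) [CommRing R] [CommRing A] [Algebra R A]
    (F B G : SSet) [∀ n : ℕ, Group (G _⦋n⦌)]
    [∀ n : ℕ, Fintype (F _⦋n⦌)] [∀ n : ℕ, DecidableEq (F _⦋n⦌)]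
    [∀ n : ℕ, Fintype (B _⦋n⦌)] [∀ n : ℕ, DecidableEq (B _⦋n⦌)]
    -- `G` is a simplicial group acting simplicially on `F` from the left
    (hGδ : ∀ (n : ℕ) (i : Fin (n + 2)) (x y : G _⦋n + 1⦌),
      G.δ i (x * y) = G.δ i x * G.δ i y)
    (hGσ : ∀ (n : ℕ) (i : Fin (n + 1)) (x y : G _⦋n⦌),
      G.σ i (x * y) = G.σ i x * G.σ i y)
    (α : ∀ n : ℕ, G _⦋n⦌ → F _⦋n⦌ → F _⦋n⦌)
    (hone : ∀ n f, α n 1 f = f)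
    (hmul : ∀ n g h f, α n (g * h) f = α n g (α n h f))
    (hαδ : ∀ (n : ℕ) (i : Fin (n + 2)) (g : G _⦋n + 1⦌) (f : F _⦋n + 1⦌),
      F.δ i (α (n + 1) g f) = α n (G.δ i g) (F.δ i f))
    (hασ : ∀ (n : ℕ) (i : Fin (n + 1)) (g : G _⦋n⦌) (f : F _⦋n⦌),
      F.σ i (α n g f) = α (n + 1) (G.σ i g) (F.σ i f))
    -- Moore's conditions on the twisting function τ
    (τ : ∀ q : ℕ, B _⦋q + 1⦌ → G _⦋q⦌)
    (hτ₁ : ∀ (q : ℕ) (b : B _⦋q + 2⦌),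
      G.δ 0 (τ (q + 1) b) = (τ q (B.δ 0 b))⁻¹ * τ q (B.δ 1 b))
    (hτ₂ : ∀ (q : ℕ) (b : B _⦋q + 2⦌) (i : Fin (q + 2)), 1 ≤ (i : ℕ) →
      τ q (B.δ i.succ b) = G.δ i (τ (q + 1) b))
    (hτ₃ : ∀ (q : ℕ) (b : B _⦋q + 1⦌) (i : Fin (q + 1)),
      τ (q + 1) (B.σ i.succ b) = G.σ i (τ q b))
    (hτ₄ : ∀ (q : ℕ) (b : B _⦋q + 1⦌), τ (q + 1) (B.σ 0 b) = 1)
    -- structure maps of the TCP `E(τ) = F ×_τ B`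
    (DE : ∀ n : ℕ, Fin (n + 2) → F _⦋n + 1⦌ × B _⦋n + 1⦌ → F _⦋n⦌ × B _⦋n⦌)
    (hDE : ∀ n i p, DE n i p =
      if (i : ℕ) = 0 then (α n (τ n p.2) (F.δ 0 p.1), B.δ 0 p.2)
      else (F.δ i p.1, B.δ i p.2))
    (SE : ∀ n : ℕ, Fin (n + 1) → F _⦋n⦌ × B _⦋n⦌ → F _⦋n + 1⦌ × B _⦋n + 1⦌)
    (hSE : ∀ n i p, SE n i p = (F.σ i p.1, B.σ i p.2))
    -- structure maps of `𝓛^R_{E(τ)}(A)` on pure tensors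
    (LD : ∀ n : ℕ, Fin (n + 2) → (F _⦋n + 1⦌ × B _⦋n + 1⦌ → A) → (F _⦋n⦌ × B _⦋n⦌ → A))
    (hLD : ∀ n i x e, LD n i x e = ∏ e' ∈ univ.filter (fun e' => DE n i e' = e), x e')
    (LS : ∀ n : ℕ, Fin (n + 1) → (F _⦋n⦌ × B _⦋n⦌ → A) → (F _⦋n + 1⦌ × B _⦋n + 1⦌ → A))
    (hLS : ∀ n i x e, LS n i x e = ∏ e' ∈ univ.filter (fun e' => SE n i e' = e), x e')
    -- internal structure maps of the simplicial algebra `C = 𝓛^R_F(A)` on pure tensors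
    (cd : ∀ n : ℕ, Fin (n + 2) → (F _⦋n + 1⦌ → A) → (F _⦋n⦌ → A))
    (hcd : ∀ n i c g, cd n i c g = ∏ f ∈ univ.filter (fun f => F.δ i f = g), c f)
    (cs : ∀ n : ℕ, Fin (n + 1) → (F _⦋n⦌ → A) → (F _⦋n + 1⦌ → A))
    (hcs : ∀ n i c g, cs n i c g = ∏ f ∈ univ.filter (fun f => F.σ i f = g), c f)
    -- structure maps of the twisted Loday construction `𝓛^R_B(𝓛^R_F(A)^τ)`,
    -- where `g ∈ Gₙ` acts on `c ∈ 𝓛^R_F(A)ₙ` by `(g • c) f = c (g⁻¹ • f)`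
    (RD : ∀ n : ℕ, Fin (n + 2) → (B _⦋n + 1⦌ → F _⦋n + 1⦌ → A) → (B _⦋n⦌ → F _⦋n⦌ → A))
    (hRD : ∀ n i x c, RD n i x c =
      ∏ b ∈ univ.filter (fun b => B.δ i b = c),
        (if (i : ℕ) = 0 then fun g => cd n 0 (x b) (α n (τ n b)⁻¹ g)
         else cd n i (x b)))
    (RS : ∀ n : ℕ, Fin (n + 1) → (B _⦋n⦌ → F _⦋n⦌ → A) → (B _⦋n + 1⦌ → F _⦋n + 1⦌ → A))
    (hRS : ∀ n i x d, RS n i x d =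
      ∏ b ∈ univ.filter (fun b => B.σ i b = d), cs n i (x b))
    -- the canonical identification (currying)
    (cur : ∀ n : ℕ, (F _⦋n⦌ × B _⦋n⦌ → A) → (B _⦋n⦌ → F _⦋n⦌ → A))
    (hcur : ∀ n x b f, cur n x b f = x (f, b)) :
    -- currying is an isomorphism of simplicial objects:
    (∀ (n : ℕ) (i : Fin (n + 2)) (x : F _⦋n + 1⦌ × B _⦋n + 1⦌ → A),
      cur n (LD n i x) = RD n i (cur (n + 1) x)) ∧
    (∀ (n : ℕ) (i : Fin (n + 1)) (x : F _⦋n⦌ × B _⦋n⦌ → A),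
      cur (n + 1) (LS n i x) = RS n i (cur n x)) := by
  constructor
  · intro n i x
    funext b f
    rw [hcur, hLD, hRD, Finset.prod_apply]
    by_cases hi : (i : ℕ) = 0
    · have hi0 : i = 0 := Fin.ext hi
      have hfil : Finset.univ.filter (fun e' => DE n i e' = (f, b))
          = Finset.univ.filter
              (fun p =>
                F.δ 0 p.1 = α n (τ n p.2)⁻¹ f ∧ B.δ 0 p.2 = b) := by
        ext p
        simp only [Finset.mem_filter, Finset.mem_univ, true_and, hDE, if_pos hi,
          Prod.mk.injEq]
        constructor
        · rintro ⟨h1, h2⟩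
          exact ⟨by rw [← h1, ← hmul, inv_mul_cancel, hone], h2⟩
        · rintro ⟨h1, h2⟩
          exact ⟨by rw [h1, ← hmul, mul_inv_cancel, hone], h2⟩
      rw [hfil,
        prod_filter_pair (fun b' f' => F.δ 0 f' = α n (τ n b')⁻¹ f)
          (fun b' => B.δ 0 b' = b) x]
      rw [hi0]
      refine Finset.prod_congr rfl fun b' _ => ?_
      rw [if_pos (show ((0 : Fin (n + 2)) : ℕ) = 0 from rfl)]
      simp only [hcd, hcur]
    · have hfil : Finset.univ.filter (fun e' => DE n i e' = (f, b))
          = Finset.univ.filter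
              (fun p => F.δ i p.1 = f ∧ B.δ i p.2 = b) := by
        ext p
        simp only [Finset.mem_filter, Finset.mem_univ, true_and, hDE, if_neg hi,
          Prod.mk.injEq]
      rw [hfil,
        prod_filter_pair (fun _ f' => F.δ i f' = f) (fun b' => B.δ i b' = b) x]
      refine Finset.prod_congr rfl fun b' _ => ?_
      rw [if_neg hi, hcd]
      refine Finset.prod_congr rfl fun f' _ => ?_
      rw [hcur]
  · intro n i x
    funext b f
    rw [hcur, hLS, hRS, Finset.prod_apply]
    have hfil : Finset.univ.filter (fun e' => SE n i e' = (f, b))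
        = Finset.univ.filter
            (fun p => F.σ i p.1 = f ∧ B.σ i p.2 = b) := by
      ext p
      simp only [Finset.mem_filter, Finset.mem_univ, true_and, hSE, Prod.mk.injEq]
    rw [hfil,
      prod_filter_pair (fun _ f' => F.σ i f' = f) (fun b' => B.σ i b' = b) x]
    refine Finset.prod_congr rfl fun b' _ => ?_
    rw [hcs]
    refine Finset.prod_congr rfl fun f' _ => ?_
    rw [hcur]
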